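/- Let R be an associative unital ring and e ∈ R an idempotent such that the map σ : Z(R) → eRe, σ(z) = z·e, is a ring isomorphism onto eRe. Let m be an ideal of the commutative ring Z(R) and let I be the two-sided ideal of R generated by m. Then σ descends to a ring isomorphism Z(R)/m ≅ (eRe)/(I ∩ eRe), and hence Z(R)/m is isomorphic as a ring to ē(R/I)ē, the corner ring of the quotient R/I at the image ē of e. -/

import Mathlib

variable {R : Type} [Ring R]

/-- The corner `eRe = {e·r·e : r ∈ R}` of a ring `R` at an idempotent `e`,
realized as `{x : R // e * x * e = x}`. -/
def Corner (e : R) : Type _ := {x : R // e * x * e = x}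

namespace Corner

variable (e : R) [he : Fact (e * e = e)]

lemma e_mul_coe (x : Corner e) : e * x.1 = x.1 := by
  conv_lhs => rw [← x.2]
  rw [← mul_assoc, ← mul_assoc, he.out]
  exact x.2

lemma coe_mul_e (x : Corner e) : x.1 * e = x.1 := by
  conv_lhs => rw [← x.2]
  rw [mul_assoc, he.out]
  exact x.2

instance : Add (Corner e) :=
  ⟨fun x y => ⟨x.1 + y.1, by rw [mul_add, add_mul, x.2, y.2]⟩⟩

instance : Zero (Corner e) := ⟨⟨0, by simp⟩⟩

instance : Neg (Corner e) := ⟨fun x => ⟨-x.1, by simpa using x.2⟩⟩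

instance : Mul (Corner e) :=
  ⟨fun x y => ⟨x.1 * y.1, by
    rw [mul_assoc, mul_assoc, coe_mul_e e y, ← mul_assoc, e_mul_coe e x]⟩⟩

/-- The corner ring `eRe` is unital with unit element `e`. -/
instance : One (Corner e) := ⟨⟨e, by rw [he.out, he.out]⟩⟩

/-- The corner `eRe` of a ring at an idempotent `e` is a ring, with multiplication
inherited from `R` and unit element `e`. -/
instance instRing : Ring (Corner e) where
  nsmul n x := ⟨n • x.1, by rw [mul_smul_comm, smul_mul_assoc, x.2]⟩
  zsmul z x := ⟨z • x.1, by rw [mul_smul_comm, smul_mul_assoc, x.2]⟩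
  nsmul_zero x := Subtype.ext (zero_nsmul x.1)
  nsmul_succ n x := Subtype.ext (succ_nsmul x.1 n)
  zsmul_zero' x := Subtype.ext (zero_zsmul x.1)
  zsmul_succ' n x := Subtype.ext
    (show (Int.ofNat (n + 1)) • x.1 = Int.ofNat n • x.1 + x.1 by
      simp [add_zsmul]; noncomm_ring)
  zsmul_neg' n x := Subtype.ext
    (show (Int.negSucc n) • x.1 = -((n.succ : ℤ) • x.1) by
      simp [negSucc_zsmul]; noncomm_ring)
  add_assoc a b c := Subtype.ext (add_assoc a.1 b.1 c.1)
  zero_add a := Subtype.ext (zero_add a.1)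
  add_zero a := Subtype.ext (add_zero a.1)
  add_comm a b := Subtype.ext (add_comm a.1 b.1)
  neg_add_cancel a := Subtype.ext (neg_add_cancel a.1)
  mul_assoc a b c := Subtype.ext (mul_assoc a.1 b.1 c.1)
  one_mul a := Subtype.ext (e_mul_coe e a)
  mul_one a := Subtype.ext (coe_mul_e e a)
  left_distrib a b c := Subtype.ext (mul_add a.1 b.1 c.1)
  right_distrib a b c := Subtype.ext (add_mul a.1 b.1 c.1)
  zero_mul a := Subtype.ext (zero_mul a.1)
  mul_zero a := Subtype.ext (mul_zero a.1)

end Corner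

/-- The map `σ : Z(R) → eRe`, `σ(z) = z·e`, as a ring homomorphism. -/
def sigmaHom (e : R) [he : Fact (e * e = e)] : Subring.center R →+* Corner e where
  toFun z := ⟨z.1 * e, by
    rw [← mul_assoc, ← z.2.comm e, mul_assoc, he.out, mul_assoc, he.out]⟩
  map_one' := Subtype.ext (one_mul e)
  map_mul' z w := Subtype.ext (by
    show (z.1 * w.1) * e = (z.1 * e) * (w.1 * e)
    rw [mul_assoc z.1 e, ← mul_assoc e w.1 e, ← w.2.comm e, mul_assoc w.1 e e, he.out,
      ← mul_assoc])
  map_zero' := Subtype.ext (zero_mul e)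
  map_add' z w := Subtype.ext (add_mul z.1 w.1 e)

section AuxLemmas

variable {R : Type} [Ring R]

lemma aux_ideal_span_mul_right {s : Set R} (hs : ∀ x ∈ s, ∀ r : R, x * r = r * x)
    {x : R} (hx : x ∈ Ideal.span s) (r : R) : x * r ∈ Ideal.span s := by
  induction hx using Submodule.span_induction with
  | mem z hz => rw [hs z hz r]; exact Ideal.mul_mem_left _ _ (Ideal.subset_span hz)
  | zero => simp
  | add a b _ _ iha ihb => rw [add_mul]; exact Ideal.add_mem _ iha ihb
  | smul c a _ ih => rw [smul_mul_assoc, smul_eq_mul]; exact Ideal.mul_mem_left _ _ ih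

lemma aux_mem_span_imp {s : Set R} (hs : ∀ x ∈ s, ∀ r : R, x * r = r * x)
    {x : R} (hx : x ∈ TwoSidedIdeal.span s) : x ∈ Ideal.span s := by
  have := TwoSidedIdeal.mem_span_iff.mp hx
    (TwoSidedIdeal.mk' (Ideal.span s : Set R) (Ideal.zero_mem _)
      (fun ha hb => Ideal.add_mem _ ha hb)
      (fun ha => neg_mem ha)
      (fun hb => Ideal.mul_mem_left _ _ hb)
      (fun ha => aux_ideal_span_mul_right hs ha _))
    (fun y hy => by simpa using Ideal.subset_span hy)
  simpa using this

lemma aux_key (e : R) [he : Fact (e * e = e)]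
    (hσ : Function.Bijective (sigmaHom e))
    (m : Ideal (Subring.center R)) (z : Subring.center R)
    (hz : z.1 * e ∈ Ideal.span (Subtype.val '' (m : Set (Subring.center R)))) : z ∈ m := by
  have main : ∀ x : R, x ∈ Ideal.span (Subtype.val '' (m : Set (Subring.center R))) →
      ∀ r : R, ∃ w ∈ m, e * (r * x) * e = w.1 * e := by
    intro x hx
    induction hx using Submodule.span_induction with
    | mem x hx =>
      obtain ⟨z₀, hz₀, rfl⟩ := hx
      intro r
      obtain ⟨u, hu⟩ := hσ.2 ⟨e * r * e, by
        rw [← mul_assoc, ← mul_assoc, he.out, mul_assoc, mul_assoc, he.out, ← mul_assoc]⟩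
      have hu' : u.1 * e = e * r * e := congrArg Subtype.val hu
      refine ⟨u * z₀, Ideal.mul_mem_left _ _ hz₀, ?_⟩
      have hc : ∀ y : R, z₀.1 * y = y * z₀.1 := fun y =>
        (Subring.mem_center_iff.mp z₀.2 y).symm
      show e * (r * z₀.1) * e = (u.1 * z₀.1) * e
      rw [← hc r, ← mul_assoc e z₀.1 r, ← hc e, mul_assoc z₀.1 e r,
        mul_assoc z₀.1 (e * r) e, ← hu', ← mul_assoc z₀.1 u.1 e, hc u.1]
    | zero => exact fun r => ⟨0, m.zero_mem, by simp⟩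
    | add a b _ _ iha ihb =>
      intro r
      obtain ⟨w₁, hw₁, h₁⟩ := iha r
      obtain ⟨w₂, hw₂, h₂⟩ := ihb r
      exact ⟨w₁ + w₂, m.add_mem hw₁ hw₂, by
        rw [mul_add r, mul_add e, add_mul, h₁, h₂]; push_cast; rw [add_mul]⟩
    | smul c a _ ih =>
      intro r
      obtain ⟨w, hw, h⟩ := ih (r * c)
      exact ⟨w, hw, by rw [smul_eq_mul, ← mul_assoc r c a]; exact h⟩
  obtain ⟨w, hw, h⟩ := main _ hz 1
  have hc : e * z.1 = z.1 * e := Subring.mem_center_iff.mp z.2 e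
  have h' : z.1 * e = w.1 * e := by
    rw [← h, one_mul, ← mul_assoc, hc, mul_assoc, he.out, mul_assoc, he.out]
  have : sigmaHom e z = sigmaHom e w := Subtype.ext h'
  rwa [hσ.1 this]

lemma aux_coe_eq_zero (J : TwoSidedIdeal R) (x : R) :
    ((x : J.ringCon.Quotient) = 0) ↔ x ∈ J := by
  rw [← RingCon.coe_zero, RingCon.eq, J.rel_iff, sub_zero]

end AuxLemmas

/-- The natural ring homomorphism from the corner `eRe` to the corner of a quotient
ring at the image of `e`. -/
def cornerQuotHom (e : R) [he : Fact (e * e = e)] (J : TwoSidedIdeal R)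
    [hf : Fact ((e : J.ringCon.Quotient) * (e : J.ringCon.Quotient) = (e : J.ringCon.Quotient))] :
    Corner e →+* Corner ((e : R) : J.ringCon.Quotient) where
  toFun x := ⟨(x.1 : J.ringCon.Quotient), by rw [← RingCon.coe_mul, ← RingCon.coe_mul, x.2]⟩
  map_one' := Subtype.ext rfl
  map_mul' x y := Subtype.ext (RingCon.coe_mul _ _ _)
  map_zero' := Subtype.ext (RingCon.coe_zero _)
  map_add' x y := Subtype.ext (RingCon.coe_add _ _ _)

set_option synthInstance.maxHeartbeats 1000000 in
set_option maxHeartbeats 2000000 in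
/-- Let `e` be an idempotent of `R` such that `σ : Z(R) → eRe`,
`σ(z) = z·e`, is a ring isomorphism onto `eRe`. Let `m` be an ideal of `Z(R)` and `I`
the two-sided ideal of `R` generated by `m`. Then `σ` descends to a ring isomorphism
`Z(R)/m ≅ (eRe)/(I ∩ eRe)`, and hence `Z(R)/m` is isomorphic as a ring to `ē(R/I)ē`,
the corner ring of `R/I` at the image `ē` of `e`. -/
theorem statement8 (e : R) (he : e * e = e)
    (hσ : haveI : Fact (e * e = e) := ⟨he⟩; Function.Bijective (sigmaHom e))
    (m : Ideal (Subring.center R)) :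
    haveI : Fact (e * e = e) := ⟨he⟩
    letI I : TwoSidedIdeal R := TwoSidedIdeal.span (Subtype.val '' (m : Set (Subring.center R)))
    letI K : TwoSidedIdeal (Corner e) := TwoSidedIdeal.mk' {x : Corner e | x.1 ∈ I}
      I.zero_mem (fun hx hy => I.add_mem hx hy) (fun hx => I.neg_mem hx)
      (fun hy => I.mul_mem_left _ _ hy) (fun hx => I.mul_mem_right _ _ hx)
    haveI : Fact ((e : I.ringCon.Quotient) * (e : I.ringCon.Quotient) = (e : I.ringCon.Quotient)) :=
      ⟨by rw [← RingCon.coe_mul, he]⟩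
    (∃ τ : (Subring.center R ⧸ m) ≃+* K.ringCon.Quotient,
      ∀ z : Subring.center R,
        τ (Ideal.Quotient.mk m z) = ((sigmaHom e z : Corner e) : K.ringCon.Quotient)) ∧
    (∃ ρ : (Subring.center R ⧸ m) ≃+* Corner ((e : R) : I.ringCon.Quotient),
      ∀ z : Subring.center R,
        (ρ (Ideal.Quotient.mk m z)).1 = ((z.1 * e : R) : I.ringCon.Quotient)) := by
  haveI : Fact (e * e = e) := ⟨he⟩
  set I : TwoSidedIdeal R :=
    TwoSidedIdeal.span (Subtype.val '' (m : Set (Subring.center R))) with hI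
  have hcen : ∀ x ∈ (Subtype.val '' (m : Set (Subring.center R))), ∀ r : R, x * r = r * x := by
    rintro x ⟨z, hz, rfl⟩ r
    exact (Subring.mem_center_iff.mp z.2 r).symm
  have hmem : ∀ z : Subring.center R, (z.1 * e ∈ I ↔ z ∈ m) := fun z =>
    ⟨fun h => aux_key e hσ m z (aux_mem_span_imp hcen h),
     fun h => I.mul_mem_right _ _ (TwoSidedIdeal.subset_span ⟨z, h, rfl⟩)⟩
  haveI hfq : Fact ((e : I.ringCon.Quotient) * (e : I.ringCon.Quotient)
      = (e : I.ringCon.Quotient)) := ⟨by rw [← RingCon.coe_mul, he]⟩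
  constructor
  · -- τ : Z(R)/m ≅ (eRe)/K
    set K : TwoSidedIdeal (Corner e) := TwoSidedIdeal.mk' {x : Corner e | x.1 ∈ I}
      I.zero_mem (fun hx hy => I.add_mem hx hy) (fun hx => I.neg_mem hx)
      (fun hy => I.mul_mem_left _ _ hy) (fun hx => I.mul_mem_right _ _ hx) with hK
    have h0 : ∀ a ∈ m, (RingCon.mk' K.ringCon).comp (sigmaHom e) a = 0 := by
      intro a ha
      show ((sigmaHom e a : Corner e) : K.ringCon.Quotient) = 0
      rw [aux_coe_eq_zero]
      have : (sigmaHom e a).1 ∈ I := (hmem a).mpr ha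
      simpa [hK] using this
    set f := Ideal.Quotient.lift m ((RingCon.mk' K.ringCon).comp (sigmaHom e)) h0 with hf
    have hbij : Function.Bijective f := by
      constructor
      · rw [injective_iff_map_eq_zero]
        intro x hx
        obtain ⟨z, rfl⟩ := Ideal.Quotient.mk_surjective x
        rw [hf, Ideal.Quotient.lift_mk, RingHom.comp_apply] at hx
        have h1 : sigmaHom e z ∈ K := by
          rw [← aux_coe_eq_zero]; exact hx
        have h2 : z ∈ m := (hmem z).mp (by simpa [hK] using h1 : (sigmaHom e z).1 ∈ I)
        exact Ideal.Quotient.eq_zero_iff_mem.mpr h2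
      · intro y
        obtain ⟨x, rfl⟩ := Quot.exists_rep y
        obtain ⟨z, rfl⟩ := hσ.2 x
        exact ⟨Ideal.Quotient.mk m z, by rw [hf, Ideal.Quotient.lift_mk, RingHom.comp_apply]; rfl⟩
    exact ⟨RingEquiv.ofBijective f hbij, fun z => by
      show f (Ideal.Quotient.mk m z) = _
      rw [hf, Ideal.Quotient.lift_mk, RingHom.comp_apply]; rfl⟩
  · -- ρ : Z(R)/m ≅ ē(R/I)ē
    have h0 : ∀ a ∈ m, ((cornerQuotHom e I).comp (sigmaHom e)) a = 0 := by
      intro a ha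
      refine Subtype.ext ?_
      show (((sigmaHom e a).1 : R) : I.ringCon.Quotient) = 0
      rw [aux_coe_eq_zero]
      exact (hmem a).mpr ha
    set g := Ideal.Quotient.lift m ((cornerQuotHom e I).comp (sigmaHom e)) h0 with hg
    have hgmk : ∀ z : Subring.center R,
        (g (Ideal.Quotient.mk m z)).1 = ((z.1 * e : R) : I.ringCon.Quotient) := by
      intro z
      rw [hg, Ideal.Quotient.lift_mk, RingHom.comp_apply]
      rfl
    have hbij : Function.Bijective g := by
      constructor
      · rw [injective_iff_map_eq_zero]
        intro x hx
        obtain ⟨z, rfl⟩ := Ideal.Quotient.mk_surjective x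
        have h1 : ((z.1 * e : R) : I.ringCon.Quotient) = 0 := by
          rw [← hgmk z, hx]; rfl
        have h2 : z ∈ m := (hmem z).mp ((aux_coe_eq_zero I _).mp h1)
        exact Ideal.Quotient.eq_zero_iff_mem.mpr h2
      · intro y
        obtain ⟨r, hr⟩ := Quot.exists_rep y.1
        have hx : e * (e * r * e) * e = e * r * e := by
          simp only [← mul_assoc]
          rw [he, mul_assoc (e * r) e e, he]
        obtain ⟨w, hw⟩ := hσ.2 ⟨e * r * e, hx⟩
        have hw' : w.1 * e = e * r * e := congrArg Subtype.val hw
        refine ⟨Ideal.Quotient.mk m w, Subtype.ext ?_⟩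
        have hr' : ((r : R) : I.ringCon.Quotient) = y.1 := hr
        rw [hgmk w, hw', RingCon.coe_mul, RingCon.coe_mul, hr']
        exact y.2
    exact ⟨RingEquiv.ofBijective g hbij, hgmk⟩
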